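/- Let k ∈ ℕ and let n ∈ ℕ be odd, let t : Fin (n+k) → ℤ, let α : Fin (n+k) → ℝ with sin(α s) ≠ 0 for every s < n, and let ρ ∈ ℝ with |ρ| < 1. Write σ(ε) = #{l < n : ε l = 1} for a sign vector ε : Fin (n+k) → {−1,1}. Then ∑_{j=0}^{∞} ρ^j · ∏_{s<n} U_{j + t s}(cos(α s)) · ∏_{n ≤ s < n+k} T_{j + t s}(cos(α s)) = ((−1)^{(n+1)/2} / (2^{n+k} · ∏_{s<n} sin(α s))) · ∑_{ε} (−1)^{σ(ε)} · [sin(∑_{s<n} (ε s)(t s + 1)(α s) + ∑_{n ≤ s} (ε s)(t s)(α s)) − ρ·sin(∑_{s<n} (ε s)(t s)(α s) + ∑_{n ≤ s} (ε s)(t s − 1)(α s))] / (1 − 2ρ·cos(∑_{s} (ε s)(α s)) + ρ²), where ε runs over all functions Fin (n+k) → {−1,1}. -/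

import Mathlib

open Polynomial Finset Complex

noncomputable def Ee (x : ℝ) : ℂ := Complex.exp ((x : ℂ) * Complex.I)

lemma Ee_add (x y : ℝ) : Ee (x + y) = Ee x * Ee y := by
  simp [Ee, ← Complex.exp_add]; ring_nf

lemma Ee_zero : Ee 0 = 1 := by simp [Ee]

lemma Ee_abs (x : ℝ) : ‖Ee x‖ = 1 := Complex.norm_exp_ofReal_mul_I x

lemma Ee_pow (x : ℝ) (j : ℕ) : Ee x ^ j = Ee (j * x) := by
  induction j with
  | zero => simp [Ee_zero]
  | succ m ih => rw [pow_succ, ih, ← Ee_add]; congr 1; push_cast; ring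

lemma Ee_eq (x : ℝ) : Ee x = (Real.cos x : ℂ) + (Real.sin x : ℂ) * Complex.I := by
  rw [Ee, Complex.exp_mul_I]; norm_cast

lemma Ee_sub_neg (x : ℝ) : Ee x - Ee (-x) = 2 * (Real.sin x : ℂ) * Complex.I := by
  rw [Ee_eq, Ee_eq]; push_cast; simp [Real.cos_neg, Real.sin_neg]; ring

lemma sin_expand (x : ℝ) : (Real.sin x : ℂ) =
    ∑ e ∈ ({-1, 1} : Finset ℤ), (e : ℂ) * Ee ((e : ℝ) * x) / (2 * Complex.I) := by
  rw [Finset.sum_pair (by norm_num : (-1 : ℤ) ≠ 1)]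
  have e1 : (((-1 : ℤ) : ℝ)) * x = -x := by push_cast; ring
  have e2 : (((1 : ℤ) : ℝ)) * x = x := by push_cast; ring
  rw [e1, e2, Ee_eq, Ee_eq, Real.cos_neg, Real.sin_neg]
  have := Complex.I_ne_zero
  push_cast
  field_simp
  ring

lemma cos_expand (x : ℝ) : (Real.cos x : ℂ) =
    ∑ e ∈ ({-1, 1} : Finset ℤ), Ee ((e : ℝ) * x) / 2 := by
  rw [Finset.sum_pair (by norm_num : (-1 : ℤ) ≠ 1)]
  have e1 : (((-1 : ℤ) : ℝ)) * x = -x := by push_cast; ring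
  have e2 : (((1 : ℤ) : ℝ)) * x = x := by push_cast; ring
  rw [e1, e2, Ee_eq, Ee_eq, Real.cos_neg, Real.sin_neg]
  push_cast
  ring

lemma Dpos (ρ ψ : ℝ) (hρ : |ρ| < 1) : 0 < 1 - 2 * ρ * Real.cos ψ + ρ ^ 2 := by
  have h3 : ρ * Real.cos ψ < 1 := by
    have h := abs_mul ρ (Real.cos ψ)
    nlinarith [le_abs_self (ρ * Real.cos ψ), Real.abs_cos_le_one ψ, abs_nonneg ρ,
      abs_nonneg (Real.cos ψ)]
  have h4 : 0 ≤ ρ ^ 2 * (1 - Real.cos ψ ^ 2) :=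
    mul_nonneg (sq_nonneg ρ) (by nlinarith [Real.neg_one_le_cos ψ, Real.cos_le_one ψ])
  nlinarith [sq_nonneg (1 - ρ * Real.cos ψ)]

lemma inv_lem (ρ ψ : ℝ) (hρ : |ρ| < 1) :
    (1 - (ρ : ℂ) * Ee ψ)⁻¹ =
      (1 - (ρ : ℂ) * Ee (-ψ)) / ((1 - 2 * ρ * Real.cos ψ + ρ ^ 2 : ℝ) : ℂ) := by
  have hD : ((1 - 2 * ρ * Real.cos ψ + ρ ^ 2 : ℝ) : ℂ) ≠ 0 := by
    exact_mod_cast (Dpos ρ ψ hρ).ne'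
  have h1 : Ee ψ * Ee (-ψ) = 1 := by rw [← Ee_add]; simp [Ee_zero]
  have h2 : Ee ψ + Ee (-ψ) = 2 * (Real.cos ψ : ℂ) := by
    rw [Ee_eq, Ee_eq]; push_cast; simp [Real.cos_neg, Real.sin_neg]; ring
  have hmul : (1 - (ρ : ℂ) * Ee ψ) * (1 - (ρ : ℂ) * Ee (-ψ)) =
      ((1 - 2 * ρ * Real.cos ψ + ρ ^ 2 : ℝ) : ℂ) := by
    push_cast
    push_cast at h2
    linear_combination (ρ : ℂ) ^ 2 * h1 - (ρ : ℂ) * h2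
  apply inv_eq_of_mul_eq_one_right
  rw [← mul_div_assoc, hmul, div_self hD]
open Polynomial Finset Complex

lemma filter_ge_eq (n k : ℕ) :
    (Finset.univ.filter fun s : Fin (n + k) => n ≤ (s : ℕ)) =
      Finset.univ.filter fun s : Fin (n + k) => ¬(s : ℕ) < n := by
  simp [not_lt]

lemma card_S (n k : ℕ) :
    (Finset.univ.filter fun s : Fin (n + k) => (s : ℕ) < n).card = n := by
  rw [Finset.card_filter]
  rw [Fin.sum_univ_eq_sum_range (fun i => if i < n then (1 : ℕ) else 0)]
  rw [← Finset.card_filter]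
  have h : (Finset.range (n + k)).filter (fun i => i < n) = Finset.range n := by
    ext x; simp; omega
  rw [h, Finset.card_range]

lemma card_Sc (n k : ℕ) :
    (Finset.univ.filter fun s : Fin (n + k) => ¬(s : ℕ) < n).card = k := by
  have h := Finset.card_filter_add_card_filter_not
    (s := (Finset.univ : Finset (Fin (n + k)))) (p := fun s => (s : ℕ) < n)
  rw [card_S] at h
  rw [Finset.card_univ, Fintype.card_fin] at h
  omega

lemma prod_expand (n k : ℕ) (θ : Fin (n + k) → ℝ) :
    (∏ s ∈ Finset.univ.filter (fun s : Fin (n + k) => (s : ℕ) < n), (Real.sin (θ s) : ℂ)) *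
      ∏ s ∈ Finset.univ.filter (fun s : Fin (n + k) => n ≤ (s : ℕ)), (Real.cos (θ s) : ℂ) =
    ∑ p ∈ Fintype.piFinset (fun _ : Fin (n + k) => ({-1, 1} : Finset ℤ)),
      (∏ s ∈ Finset.univ.filter (fun s : Fin (n + k) => (s : ℕ) < n), (p s : ℂ)) *
        Ee (∑ s, (p s : ℝ) * θ s) / ((2 * Complex.I) ^ n * 2 ^ k) := by
  have h1 : (∏ s ∈ Finset.univ.filter (fun s : Fin (n + k) => (s : ℕ) < n),
        (Real.sin (θ s) : ℂ)) *
      ∏ s ∈ Finset.univ.filter (fun s : Fin (n + k) => n ≤ (s : ℕ)), (Real.cos (θ s) : ℂ) =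
      ∏ s : Fin (n + k),
        (if (s : ℕ) < n then (Real.sin (θ s) : ℂ) else (Real.cos (θ s) : ℂ)) := by
    rw [← Finset.prod_filter_mul_prod_filter_not Finset.univ
      (fun s : Fin (n + k) => (s : ℕ) < n), filter_ge_eq]
    congr 1
    · exact Finset.prod_congr rfl (fun s hs => by rw [if_pos (Finset.mem_filter.mp hs).2])
    · exact Finset.prod_congr rfl (fun s hs => by rw [if_neg (Finset.mem_filter.mp hs).2])
  have key : ∀ s : Fin (n + k),
      (if (s : ℕ) < n then (Real.sin (θ s) : ℂ) else (Real.cos (θ s) : ℂ)) =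
      ∑ e ∈ ({-1, 1} : Finset ℤ),
        (if (s : ℕ) < n then (e : ℂ) / (2 * Complex.I) else 1 / 2) * Ee ((e : ℝ) * θ s) := by
    intro s
    split
    · rw [sin_expand]; exact Finset.sum_congr rfl (fun e _ => by ring)
    · rw [cos_expand]; exact Finset.sum_congr rfl (fun e _ => by ring)
  rw [h1]
  simp_rw [key]
  rw [Finset.prod_univ_sum]
  refine Finset.sum_congr rfl (fun p hp => ?_)
  rw [Finset.prod_mul_distrib]
  have h2 : ∏ s : Fin (n + k), Ee ((p s : ℝ) * θ s) = Ee (∑ s, (p s : ℝ) * θ s) := by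
    rw [Ee]
    rw [show (((∑ s, (p s : ℝ) * θ s) : ℝ) : ℂ) * Complex.I
        = ∑ s : Fin (n + k), ((((p s : ℝ) * θ s) : ℝ) : ℂ) * Complex.I by
      rw [← Finset.sum_mul]; norm_cast]
    rw [Complex.exp_sum]
    rfl
  have h3 : (∏ s : Fin (n + k),
      (if (s : ℕ) < n then (p s : ℂ) / (2 * Complex.I) else 1 / 2)) =
      (∏ s ∈ Finset.univ.filter (fun s : Fin (n + k) => (s : ℕ) < n), (p s : ℂ)) /
        ((2 * Complex.I) ^ n * 2 ^ k) := by
    rw [← Finset.prod_filter_mul_prod_filter_not Finset.univ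
      (fun s : Fin (n + k) => (s : ℕ) < n)]
    have ha : (∏ s ∈ Finset.univ.filter (fun s : Fin (n + k) => (s : ℕ) < n),
        (if (s : ℕ) < n then (p s : ℂ) / (2 * Complex.I) else 1 / 2)) =
        (∏ s ∈ Finset.univ.filter (fun s : Fin (n + k) => (s : ℕ) < n), (p s : ℂ)) /
          (2 * Complex.I) ^ n := by
      rw [Finset.prod_congr rfl (fun s hs => if_pos (Finset.mem_filter.mp hs).2),
        Finset.prod_div_distrib, Finset.prod_const, card_S]
    have hb : (∏ s ∈ Finset.univ.filter (fun s : Fin (n + k) => ¬(s : ℕ) < n),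
        (if (s : ℕ) < n then (p s : ℂ) / (2 * Complex.I) else 1 / 2)) = 1 / 2 ^ k := by
      rw [Finset.prod_congr rfl (fun s hs => by rw [if_neg (Finset.mem_filter.mp hs).2])]
      rw [Finset.prod_const, card_Sc, one_div, one_div, inv_pow]
    rw [ha, hb]
    ring
  rw [h2, h3]
  ring

lemma mem_pm {N : ℕ} {p : Fin N → ℤ}
    (hp : p ∈ Fintype.piFinset fun _ : Fin N => ({-1, 1} : Finset ℤ)) (i : Fin N) :
    p i = -1 ∨ p i = 1 := by
  have := Fintype.mem_piFinset.mp hp i; simpa using this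

lemma neg_mem_pm {N : ℕ} {p : Fin N → ℤ}
    (hp : p ∈ Fintype.piFinset fun _ : Fin N => ({-1, 1} : Finset ℤ)) :
    (-p) ∈ Fintype.piFinset fun _ : Fin N => ({-1, 1} : Finset ℤ) := by
  rw [Fintype.mem_piFinset]
  intro i
  rcases mem_pm hp i with h | h <;> simp [Pi.neg_apply, h]

lemma sum_neg_reindex {N : ℕ} {M : Type*} [AddCommMonoid M] (f : (Fin N → ℤ) → M) :
    ∑ p ∈ Fintype.piFinset (fun _ : Fin N => ({-1, 1} : Finset ℤ)), f p =
      ∑ p ∈ Fintype.piFinset (fun _ : Fin N => ({-1, 1} : Finset ℤ)), f (-p) := by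
  refine Finset.sum_nbij' (fun p => -p) (fun p => -p) (fun p hp => neg_mem_pm hp)
    (fun p hp => neg_mem_pm hp) (fun p _ => by simp) (fun p _ => by simp)
    (fun p hp => by simp)

noncomputable def pie (N : ℕ) :
    (Fin N → ({-1, 1} : Finset ℤ)) ≃
      ↥(Fintype.piFinset fun _ : Fin N => ({-1, 1} : Finset ℤ)) where
  toFun ε := ⟨fun i => (ε i : ℤ), by
    rw [Fintype.mem_piFinset]; exact fun i => (ε i).2⟩
  invFun x := fun i => ⟨x.1 i, Fintype.mem_piFinset.mp x.2 i⟩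
  left_inv ε := by ext i; rfl
  right_inv x := by ext i; rfl

lemma sum_eps_eq {N : ℕ} {M : Type*} [AddCommMonoid M] (G : (Fin N → ℤ) → M) :
    (∑ ε : Fin N → ({-1, 1} : Finset ℤ), G (fun i => (ε i : ℤ))) =
      ∑ p ∈ Fintype.piFinset (fun _ : Fin N => ({-1, 1} : Finset ℤ)), G p := by
  rw [← Finset.sum_coe_sort (Fintype.piFinset fun _ : Fin N => ({-1, 1} : Finset ℤ)) G]
  exact Equiv.sum_comp (pie N) (fun x => G x.1)

lemma pi_eq (n k : ℕ) (p : Fin (n + k) → ℤ)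
    (hp : p ∈ Fintype.piFinset fun _ : Fin (n + k) => ({-1, 1} : Finset ℤ)) :
    (∏ s ∈ Finset.univ.filter (fun s : Fin (n + k) => (s : ℕ) < n), (p s : ℂ)) *
      (-1) ^ (Finset.univ.filter
        (fun l : Fin (n + k) => (l : ℕ) < n ∧ p l = 1)).card = (-1) ^ n := by
  have h1 : (∏ s ∈ Finset.univ.filter (fun s : Fin (n + k) => (s : ℕ) < n), (p s : ℂ)) =
      ∏ s ∈ Finset.univ.filter (fun s : Fin (n + k) => (s : ℕ) < n),
        (if p s = 1 then (1 : ℂ) else -1) := by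
    refine Finset.prod_congr rfl (fun s _ => ?_)
    rcases mem_pm hp s with h | h <;> simp [h]
  rw [h1, Finset.prod_ite, Finset.prod_const_one, Finset.prod_const, one_mul]
  have h2 : Finset.univ.filter (fun l : Fin (n + k) => (l : ℕ) < n ∧ p l = 1) =
      (Finset.univ.filter (fun s : Fin (n + k) => (s : ℕ) < n)).filter (fun l => p l = 1) := by
    rw [Finset.filter_filter]
  rw [h2, ← pow_add]
  have h3 := Finset.card_filter_add_card_filter_not
    (s := Finset.univ.filter (fun s : Fin (n + k) => (s : ℕ) < n)) (p := fun l => p l = 1)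
  rw [card_S] at h3
  rw [Nat.add_comm, h3]

lemma scalar_step (n k σn : ℕ) (hn : Odd n) (π : ℂ) (hπ : π * (-1) ^ σn = -1)
    (D C W : ℝ) (hD : (D : ℂ) ≠ 0) (hC : (C : ℂ) ≠ 0) :
    π * Complex.I * (W : ℂ) / ((D : ℂ) * ((2 * Complex.I) ^ n * 2 ^ k) * (C : ℂ)) =
      ((((-1 : ℝ)) ^ ((n + 1) / 2) / (2 ^ (n + k) * C) : ℝ) : ℂ) *
        ((((-1 : ℝ)) ^ σn * (W / D) : ℝ) : ℂ) := by
  obtain ⟨m, rfl⟩ := hn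
  have hI : (Complex.I) ^ (2 * m + 1) = (-1) ^ m * Complex.I := by
    rw [pow_succ, pow_mul, Complex.I_sq]
  have hdiv : (2 * m + 1 + 1) / 2 = m + 1 := by omega
  have hone : ((-1 : ℂ)) ^ σn * (-1) ^ σn = 1 := by
    rw [← pow_add, ← two_mul, pow_mul]; norm_num
  have hmone : ((-1 : ℂ)) ^ m * (-1) ^ m = 1 := by
    rw [← pow_add, ← two_mul, pow_mul]; norm_num
  have hπ' : π = -(-1) ^ σn := by
    have h := congrArg (· * (-1 : ℂ) ^ σn) hπ
    rw [mul_assoc, hone, mul_one] at h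
    rw [h]; ring
  subst hπ'
  have hI0 := Complex.I_ne_zero
  have h20 : (2 : ℂ) ≠ 0 := by norm_num
  have hm1 : ((-1 : ℂ)) ^ m ≠ 0 := by apply pow_ne_zero; norm_num
  rw [hdiv]
  push_cast
  rw [mul_pow, hI]
  rw [div_eq_iff (by
    apply mul_ne_zero (mul_ne_zero hD _) hC
    apply mul_ne_zero (mul_ne_zero (pow_ne_zero _ h20) (mul_ne_zero hm1 hI0)) (pow_ne_zero _ h20))]
  field_simp
  ring_nf
  simp only [pow_mul]
  rw [show ((-1 : ℂ) ^ m) ^ 2 = ((-1 : ℂ) ^ 2) ^ m by rw [← pow_mul, ← pow_mul, Nat.mul_comm]]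
  norm_num

lemma geom_norm (ρ : ℝ) (hρ : |ρ| < 1) (ψ : ℝ) : ‖(ρ : ℂ) * Ee ψ‖ < 1 := by
  rw [norm_mul, Complex.norm_real, Real.norm_eq_abs, Ee_abs, mul_one]
  exact hρ

lemma geom_summable (ρ : ℝ) (hρ : |ρ| < 1) (ψ : ℝ) (K : ℂ) :
    Summable (fun j : ℕ => ((ρ : ℂ) * Ee ψ) ^ j * K) :=
  (summable_geometric_of_norm_lt_one (geom_norm ρ hρ ψ)).mul_right K

lemma geom_tsum (ρ : ℝ) (hρ : |ρ| < 1) (ψ : ℝ) (K : ℂ) :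
    ∑' j : ℕ, ((ρ : ℂ) * Ee ψ) ^ j * K = (1 - (ρ : ℂ) * Ee ψ)⁻¹ * K := by
  rw [tsum_mul_right, tsum_geometric_of_norm_lt_one (geom_norm ρ hρ ψ)]

noncomputable def PhiF (n k : ℕ) (t : Fin (n + k) → ℤ) (α : Fin (n + k) → ℝ)
    (p : Fin (n + k) → ℤ) : ℝ :=
  (∑ s ∈ Finset.univ.filter (fun s : Fin (n + k) => (s : ℕ) < n),
      (p s : ℝ) * ((t s : ℝ) + 1) * α s) +
    ∑ s ∈ Finset.univ.filter (fun s : Fin (n + k) => n ≤ (s : ℕ)),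
      (p s : ℝ) * (t s : ℝ) * α s

noncomputable def PsiF (n k : ℕ) (α : Fin (n + k) → ℝ) (p : Fin (n + k) → ℤ) : ℝ :=
  ∑ s, (p s : ℝ) * α s

noncomputable def DF (ρ : ℝ) (n k : ℕ) (α : Fin (n + k) → ℝ) (p : Fin (n + k) → ℤ) : ℝ :=
  1 - 2 * ρ * Real.cos (PsiF n k α p) + ρ ^ 2

lemma Phi_neg (n k : ℕ) (t : Fin (n + k) → ℤ) (α : Fin (n + k) → ℝ) (p : Fin (n + k) → ℤ) :
    PhiF n k t α (-p) = -PhiF n k t α p := by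
  simp only [PhiF, Pi.neg_apply, Int.cast_neg, neg_mul, Finset.sum_neg_distrib, neg_add]

lemma Psi_neg (n k : ℕ) (α : Fin (n + k) → ℝ) (p : Fin (n + k) → ℤ) :
    PsiF n k α (-p) = -PsiF n k α p := by
  simp only [PsiF, Pi.neg_apply, Int.cast_neg, neg_mul, Finset.sum_neg_distrib]

lemma D_neg (ρ : ℝ) (n k : ℕ) (α : Fin (n + k) → ℝ) (p : Fin (n + k) → ℤ) :
    DF ρ n k α (-p) = DF ρ n k α p := by
  simp only [DF, Psi_neg, Real.cos_neg]

lemma sum_theta (n k : ℕ) (t : Fin (n + k) → ℤ) (α : Fin (n + k) → ℝ)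
    (p : Fin (n + k) → ℤ) (j : ℕ) :
    ∑ s, (p s : ℝ) * (((j : ℝ) + (t s : ℝ) + if (s : ℕ) < n then 1 else 0) * α s) =
      (j : ℝ) * PsiF n k α p + PhiF n k t α p := by
  have h1 : ∀ f : Fin (n + k) → ℝ, ∑ s, f s =
      (∑ s ∈ Finset.univ.filter (fun s : Fin (n + k) => (s : ℕ) < n), f s) +
        ∑ s ∈ Finset.univ.filter (fun s : Fin (n + k) => ¬(s : ℕ) < n), f s :=
    fun f => (Finset.sum_filter_add_sum_filter_not Finset.univ _ f).symm
  rw [PsiF, PhiF, filter_ge_eq]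
  rw [h1 (fun s => (p s : ℝ) * (((j : ℝ) + (t s : ℝ) + if (s : ℕ) < n then 1 else 0) * α s)),
    h1 (fun s => (p s : ℝ) * α s)]
  have hS : ∑ s ∈ Finset.univ.filter (fun s : Fin (n + k) => (s : ℕ) < n),
      (p s : ℝ) * (((j : ℝ) + (t s : ℝ) + if (s : ℕ) < n then 1 else 0) * α s) =
      (j : ℝ) * (∑ s ∈ Finset.univ.filter (fun s : Fin (n + k) => (s : ℕ) < n),
        (p s : ℝ) * α s) +
      ∑ s ∈ Finset.univ.filter (fun s : Fin (n + k) => (s : ℕ) < n),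
        (p s : ℝ) * ((t s : ℝ) + 1) * α s := by
    rw [Finset.mul_sum, ← Finset.sum_add_distrib]
    refine Finset.sum_congr rfl (fun s hs => ?_)
    rw [if_pos (Finset.mem_filter.mp hs).2]; ring
  have hSc : ∑ s ∈ Finset.univ.filter (fun s : Fin (n + k) => ¬(s : ℕ) < n),
      (p s : ℝ) * (((j : ℝ) + (t s : ℝ) + if (s : ℕ) < n then 1 else 0) * α s) =
      (j : ℝ) * (∑ s ∈ Finset.univ.filter (fun s : Fin (n + k) => ¬(s : ℕ) < n),
        (p s : ℝ) * α s) +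
      ∑ s ∈ Finset.univ.filter (fun s : Fin (n + k) => ¬(s : ℕ) < n),
        (p s : ℝ) * (t s : ℝ) * α s := by
    rw [Finset.mul_sum, ← Finset.sum_add_distrib]
    refine Finset.sum_congr rfl (fun s hs => ?_)
    rw [if_neg (Finset.mem_filter.mp hs).2]; ring
  rw [hS, hSc]
  ring

lemma Phi_sub_Psi (n k : ℕ) (t : Fin (n + k) → ℤ) (α : Fin (n + k) → ℝ)
    (p : Fin (n + k) → ℤ) :
    (∑ s ∈ Finset.univ.filter (fun s : Fin (n + k) => (s : ℕ) < n),
        (p s : ℝ) * (t s : ℝ) * α s) +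
      ∑ s ∈ Finset.univ.filter (fun s : Fin (n + k) => n ≤ (s : ℕ)),
        (p s : ℝ) * ((t s : ℝ) - 1) * α s =
      PhiF n k t α p - PsiF n k α p := by
  have h1 : ∀ f : Fin (n + k) → ℝ, ∑ s, f s =
      (∑ s ∈ Finset.univ.filter (fun s : Fin (n + k) => (s : ℕ) < n), f s) +
        ∑ s ∈ Finset.univ.filter (fun s : Fin (n + k) => ¬(s : ℕ) < n), f s :=
    fun f => (Finset.sum_filter_add_sum_filter_not Finset.univ _ f).symm
  rw [PhiF, PsiF, filter_ge_eq, h1 (fun s => (p s : ℝ) * α s)]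
  rw [show ∀ A B C D' : ℝ, (A + B) - (C + D') = (A - C) + (B - D') from fun _ _ _ _ => by ring]
  rw [← Finset.sum_sub_distrib, ← Finset.sum_sub_distrib]
  exact congrArg₂ (· + ·) (Finset.sum_congr rfl fun s _ => by ring)
    (Finset.sum_congr rfl fun s _ => by ring)

lemma term_eq (n k : ℕ) (t : Fin (n + k) → ℤ) (α : Fin (n + k) → ℝ)
    (hα : ∀ s : Fin (n + k), (s : ℕ) < n → Real.sin (α s) ≠ 0) (ρ : ℝ) (j : ℕ) :
    ρ ^ j *
        (∏ s ∈ Finset.univ.filter (fun s : Fin (n + k) => (s : ℕ) < n),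
          (Chebyshev.U ℝ ((j : ℤ) + t s)).eval (Real.cos (α s))) *
        (∏ s ∈ Finset.univ.filter (fun s : Fin (n + k) => n ≤ (s : ℕ)),
          (Chebyshev.T ℝ ((j : ℤ) + t s)).eval (Real.cos (α s))) =
      ρ ^ j *
        ((∏ s ∈ Finset.univ.filter (fun s : Fin (n + k) => (s : ℕ) < n),
            Real.sin (((j : ℝ) + (t s : ℝ) + if (s : ℕ) < n then 1 else 0) * α s)) /
          ∏ s ∈ Finset.univ.filter (fun s : Fin (n + k) => (s : ℕ) < n), Real.sin (α s)) *
        ∏ s ∈ Finset.univ.filter (fun s : Fin (n + k) => n ≤ (s : ℕ)),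
          Real.cos (((j : ℝ) + (t s : ℝ) + if (s : ℕ) < n then 1 else 0) * α s) := by
  have hU : (∏ s ∈ Finset.univ.filter (fun s : Fin (n + k) => (s : ℕ) < n),
      (Chebyshev.U ℝ ((j : ℤ) + t s)).eval (Real.cos (α s))) =
      ∏ s ∈ Finset.univ.filter (fun s : Fin (n + k) => (s : ℕ) < n),
        (Real.sin (((j : ℝ) + (t s : ℝ) + if (s : ℕ) < n then 1 else 0) * α s) /
          Real.sin (α s)) := by
    refine Finset.prod_congr rfl (fun s hs => ?_)
    have hmem := (Finset.mem_filter.mp hs).2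
    rw [eq_div_iff (hα s hmem)]
    rw [Polynomial.Chebyshev.U_real_cos (α s) ((j : ℤ) + t s)]
    congr 1
    rw [if_pos hmem]
    push_cast
    ring
  have hT : (∏ s ∈ Finset.univ.filter (fun s : Fin (n + k) => n ≤ (s : ℕ)),
      (Chebyshev.T ℝ ((j : ℤ) + t s)).eval (Real.cos (α s))) =
      ∏ s ∈ Finset.univ.filter (fun s : Fin (n + k) => n ≤ (s : ℕ)),
        Real.cos (((j : ℝ) + (t s : ℝ) + if (s : ℕ) < n then 1 else 0) * α s) := by
    refine Finset.prod_congr rfl (fun s hs => ?_)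
    have hmem := (Finset.mem_filter.mp hs).2
    rw [Polynomial.Chebyshev.T_real_cos (α s) ((j : ℤ) + t s)]
    congr 1
    rw [if_neg (not_lt.mpr hmem)]
    push_cast
    ring
  rw [hU, hT, Finset.prod_div_distrib]

theorem chebyshev_mixed_gen_fun_odd (k n : ℕ) (hn : Odd n) (t : Fin (n + k) → ℤ)
    (α : Fin (n + k) → ℝ) (hα : ∀ s : Fin (n + k), (s : ℕ) < n → Real.sin (α s) ≠ 0)
    (ρ : ℝ) (hρ : |ρ| < 1) :
    ∑' j : ℕ, ρ ^ j *
        (∏ s ∈ Finset.univ.filter (fun s : Fin (n + k) => (s : ℕ) < n),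
          (Chebyshev.U ℝ ((j : ℤ) + t s)).eval (Real.cos (α s))) *
        (∏ s ∈ Finset.univ.filter (fun s : Fin (n + k) => n ≤ (s : ℕ)),
          (Chebyshev.T ℝ ((j : ℤ) + t s)).eval (Real.cos (α s))) =
      ((-1 : ℝ) ^ ((n + 1) / 2) /
          (2 ^ (n + k) *
            ∏ s ∈ Finset.univ.filter (fun s : Fin (n + k) => (s : ℕ) < n), Real.sin (α s))) *
        ∑ ε : Fin (n + k) → ({-1, 1} : Finset ℤ),
          (-1 : ℝ) ^
              (Finset.univ.filter
                (fun l : Fin (n + k) => (l : ℕ) < n ∧ (ε l : ℤ) = 1)).card *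
            ((Real.sin
                ((∑ s ∈ Finset.univ.filter (fun s : Fin (n + k) => (s : ℕ) < n),
                    ((ε s : ℤ) : ℝ) * ((t s : ℝ) + 1) * α s) +
                  ∑ s ∈ Finset.univ.filter (fun s : Fin (n + k) => n ≤ (s : ℕ)),
                    ((ε s : ℤ) : ℝ) * (t s : ℝ) * α s) -
                ρ * Real.sin
                  ((∑ s ∈ Finset.univ.filter (fun s : Fin (n + k) => (s : ℕ) < n),
                      ((ε s : ℤ) : ℝ) * (t s : ℝ) * α s) +
                    ∑ s ∈ Finset.univ.filter (fun s : Fin (n + k) => n ≤ (s : ℕ)),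
                      ((ε s : ℤ) : ℝ) * ((t s : ℝ) - 1) * α s)) /
              (1 - 2 * ρ * Real.cos (∑ s, ((ε s : ℤ) : ℝ) * α s) + ρ ^ 2)) := by
  classical
  have hCr0 : (∏ s ∈ Finset.univ.filter (fun s : Fin (n + k) => (s : ℕ) < n),
      Real.sin (α s)) ≠ 0 :=
    Finset.prod_ne_zero_iff.mpr (fun s hs => hα s (Finset.mem_filter.mp hs).2)
  simp only [Phi_sub_Psi n k t α]
  set G : (Fin (n + k) → ℤ) → ℝ := fun p =>
    (-1) ^ (Finset.univ.filter (fun l : Fin (n + k) => (l : ℕ) < n ∧ p l = 1)).card *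
      ((Real.sin ((∑ s ∈ Finset.univ.filter (fun s : Fin (n + k) => (s : ℕ) < n),
            (p s : ℝ) * ((t s : ℝ) + 1) * α s) +
            ∑ s ∈ Finset.univ.filter (fun s : Fin (n + k) => n ≤ (s : ℕ)),
            (p s : ℝ) * (t s : ℝ) * α s) -
        ρ * Real.sin (PhiF n k t α p - PsiF n k α p)) /
        (1 - 2 * ρ * Real.cos (∑ s, (p s : ℝ) * α s) + ρ ^ 2)) with hGdef
  refine Eq.trans ?_ (congrArg (fun z : ℝ =>
    ((-1 : ℝ) ^ ((n + 1) / 2) /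
      (2 ^ (n + k) *
        ∏ s ∈ Finset.univ.filter (fun s : Fin (n + k) => (s : ℕ) < n), Real.sin (α s))) * z)
    (sum_eps_eq G).symm)
  beta_reduce
  apply Complex.ofReal_injective
  rw [Complex.ofReal_tsum]
  have hterm : ∀ j : ℕ,
      ((ρ ^ j *
          (∏ s ∈ Finset.univ.filter (fun s : Fin (n + k) => (s : ℕ) < n),
            (Chebyshev.U ℝ ((j : ℤ) + t s)).eval (Real.cos (α s))) *
          ∏ s ∈ Finset.univ.filter (fun s : Fin (n + k) => n ≤ (s : ℕ)),
            (Chebyshev.T ℝ ((j : ℤ) + t s)).eval (Real.cos (α s)) : ℝ) : ℂ) =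
      ∑ p ∈ Fintype.piFinset (fun _ : Fin (n + k) => ({-1, 1} : Finset ℤ)),
        ((ρ : ℂ) * Ee (PsiF n k α p)) ^ j *
          ((∏ s ∈ Finset.univ.filter (fun s : Fin (n + k) => (s : ℕ) < n), (p s : ℂ)) *
            Ee (PhiF n k t α p) /
            ((2 * Complex.I) ^ n * 2 ^ k *
              ((∏ s ∈ Finset.univ.filter (fun s : Fin (n + k) => (s : ℕ) < n),
                Real.sin (α s) : ℝ) : ℂ))) := by
    intro j
    rw [term_eq n k t α hα ρ j]
    rw [Complex.ofReal_mul, Complex.ofReal_mul, Complex.ofReal_pow, Complex.ofReal_div,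
      Complex.ofReal_prod, Complex.ofReal_prod, Complex.ofReal_prod]
    rw [show ∀ a b c d : ℂ, a * (b / c) * d = a * (b * d) / c from fun a b c d => by ring]
    rw [prod_expand n k (fun s => ((j : ℝ) + (t s : ℝ) + if (s : ℕ) < n then 1 else 0) * α s)]
    rw [Finset.mul_sum, Finset.sum_div]
    refine Finset.sum_congr rfl (fun p _ => ?_)
    rw [sum_theta n k t α p j, Ee_add ((j : ℝ) * PsiF n k α p) (PhiF n k t α p), ← Ee_pow]
    ring
  calc (∑' j : ℕ, ((ρ ^ j *
          (∏ s ∈ Finset.univ.filter (fun s : Fin (n + k) => (s : ℕ) < n),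
            (Chebyshev.U ℝ ((j : ℤ) + t s)).eval (Real.cos (α s))) *
          ∏ s ∈ Finset.univ.filter (fun s : Fin (n + k) => n ≤ (s : ℕ)),
            (Chebyshev.T ℝ ((j : ℤ) + t s)).eval (Real.cos (α s)) : ℝ) : ℂ))
      = ∑' j : ℕ, ∑ p ∈ Fintype.piFinset (fun _ : Fin (n + k) => ({-1, 1} : Finset ℤ)),
          ((ρ : ℂ) * Ee (PsiF n k α p)) ^ j *
          ((∏ s ∈ Finset.univ.filter (fun s : Fin (n + k) => (s : ℕ) < n), (p s : ℂ)) *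
            Ee (PhiF n k t α p) /
            ((2 * Complex.I) ^ n * 2 ^ k *
              ((∏ s ∈ Finset.univ.filter (fun s : Fin (n + k) => (s : ℕ) < n),
                Real.sin (α s) : ℝ) : ℂ))) := tsum_congr hterm
    _ = ∑ p ∈ Fintype.piFinset (fun _ : Fin (n + k) => ({-1, 1} : Finset ℤ)),
        ∑' j : ℕ, ((ρ : ℂ) * Ee (PsiF n k α p)) ^ j *
          ((∏ s ∈ Finset.univ.filter (fun s : Fin (n + k) => (s : ℕ) < n), (p s : ℂ)) *
            Ee (PhiF n k t α p) /
            ((2 * Complex.I) ^ n * 2 ^ k *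
              ((∏ s ∈ Finset.univ.filter (fun s : Fin (n + k) => (s : ℕ) < n),
                Real.sin (α s) : ℝ) : ℂ))) :=
        Summable.tsum_finsetSum (fun p _ => geom_summable ρ hρ _ _)
    _ = ∑ p ∈ Fintype.piFinset (fun _ : Fin (n + k) => ({-1, 1} : Finset ℤ)),
        (1 - (ρ : ℂ) * Ee (PsiF n k α p))⁻¹ *
          ((∏ s ∈ Finset.univ.filter (fun s : Fin (n + k) => (s : ℕ) < n), (p s : ℂ)) *
            Ee (PhiF n k t α p) /
            ((2 * Complex.I) ^ n * 2 ^ k *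
              ((∏ s ∈ Finset.univ.filter (fun s : Fin (n + k) => (s : ℕ) < n),
                Real.sin (α s) : ℝ) : ℂ))) :=
        Finset.sum_congr rfl (fun p _ => geom_tsum ρ hρ _ _)
    _ = ∑ p ∈ Fintype.piFinset (fun _ : Fin (n + k) => ({-1, 1} : Finset ℤ)),
        (∏ s ∈ Finset.univ.filter (fun s : Fin (n + k) => (s : ℕ) < n), (p s : ℂ)) *
          (Ee (PhiF n k t α p) - (ρ : ℂ) * Ee (PhiF n k t α p - PsiF n k α p)) /
          (((1 - 2 * ρ * Real.cos (PsiF n k α p) + ρ ^ 2 : ℝ) : ℂ) *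
            ((2 * Complex.I) ^ n * 2 ^ k) *
            ((∏ s ∈ Finset.univ.filter (fun s : Fin (n + k) => (s : ℕ) < n),
              Real.sin (α s) : ℝ) : ℂ)) := by
        refine Finset.sum_congr rfl (fun p _ => ?_)
        rw [inv_lem ρ (PsiF n k α p) hρ]
        rw [show Ee (PhiF n k t α p - PsiF n k α p)
            = Ee (PhiF n k t α p) * Ee (-(PsiF n k α p)) from by
          rw [← Ee_add, sub_eq_add_neg]]
        ring
    _ = ∑ p ∈ Fintype.piFinset (fun _ : Fin (n + k) => ({-1, 1} : Finset ℤ)),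
        (∏ s ∈ Finset.univ.filter (fun s : Fin (n + k) => (s : ℕ) < n), (p s : ℂ)) *
          Complex.I *
          ((Real.sin (PhiF n k t α p) -
            ρ * Real.sin (PhiF n k t α p - PsiF n k α p) : ℝ) : ℂ) /
          (((1 - 2 * ρ * Real.cos (PsiF n k α p) + ρ ^ 2 : ℝ) : ℂ) *
            ((2 * Complex.I) ^ n * 2 ^ k) *
            ((∏ s ∈ Finset.univ.filter (fun s : Fin (n + k) => (s : ℕ) < n),
              Real.sin (α s) : ℝ) : ℂ)) := by
        have hrein := sum_neg_reindex (N := n + k) (M := ℂ) (fun p =>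
          (∏ s ∈ Finset.univ.filter (fun s : Fin (n + k) => (s : ℕ) < n), (p s : ℂ)) *
            (Ee (PhiF n k t α p) - (ρ : ℂ) * Ee (PhiF n k t α p - PsiF n k α p)) /
            (((1 - 2 * ρ * Real.cos (PsiF n k α p) + ρ ^ 2 : ℝ) : ℂ) *
              ((2 * Complex.I) ^ n * 2 ^ k) *
              ((∏ s ∈ Finset.univ.filter (fun s : Fin (n + k) => (s : ℕ) < n),
                Real.sin (α s) : ℝ) : ℂ)))
        have h2 : (∑ p ∈ Fintype.piFinset (fun _ : Fin (n + k) => ({-1, 1} : Finset ℤ)),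
            (∏ s ∈ Finset.univ.filter (fun s : Fin (n + k) => (s : ℕ) < n), (p s : ℂ)) *
              (Ee (PhiF n k t α p) - (ρ : ℂ) * Ee (PhiF n k t α p - PsiF n k α p)) /
              (((1 - 2 * ρ * Real.cos (PsiF n k α p) + ρ ^ 2 : ℝ) : ℂ) *
                ((2 * Complex.I) ^ n * 2 ^ k) *
                ((∏ s ∈ Finset.univ.filter (fun s : Fin (n + k) => (s : ℕ) < n),
                  Real.sin (α s) : ℝ) : ℂ))) +
            ∑ p ∈ Fintype.piFinset (fun _ : Fin (n + k) => ({-1, 1} : Finset ℤ)),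
            (∏ s ∈ Finset.univ.filter (fun s : Fin (n + k) => (s : ℕ) < n), (p s : ℂ)) *
              (Ee (PhiF n k t α p) - (ρ : ℂ) * Ee (PhiF n k t α p - PsiF n k α p)) /
              (((1 - 2 * ρ * Real.cos (PsiF n k α p) + ρ ^ 2 : ℝ) : ℂ) *
                ((2 * Complex.I) ^ n * 2 ^ k) *
                ((∏ s ∈ Finset.univ.filter (fun s : Fin (n + k) => (s : ℕ) < n),
                  Real.sin (α s) : ℝ) : ℂ)) =
            (∑ p ∈ Fintype.piFinset (fun _ : Fin (n + k) => ({-1, 1} : Finset ℤ)),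
            (∏ s ∈ Finset.univ.filter (fun s : Fin (n + k) => (s : ℕ) < n), (p s : ℂ)) *
              Complex.I *
              ((Real.sin (PhiF n k t α p) -
                ρ * Real.sin (PhiF n k t α p - PsiF n k α p) : ℝ) : ℂ) /
              (((1 - 2 * ρ * Real.cos (PsiF n k α p) + ρ ^ 2 : ℝ) : ℂ) *
                ((2 * Complex.I) ^ n * 2 ^ k) *
                ((∏ s ∈ Finset.univ.filter (fun s : Fin (n + k) => (s : ℕ) < n),
                  Real.sin (α s) : ℝ) : ℂ))) +
            ∑ p ∈ Fintype.piFinset (fun _ : Fin (n + k) => ({-1, 1} : Finset ℤ)),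
            (∏ s ∈ Finset.univ.filter (fun s : Fin (n + k) => (s : ℕ) < n), (p s : ℂ)) *
              Complex.I *
              ((Real.sin (PhiF n k t α p) -
                ρ * Real.sin (PhiF n k t α p - PsiF n k α p) : ℝ) : ℂ) /
              (((1 - 2 * ρ * Real.cos (PsiF n k α p) + ρ ^ 2 : ℝ) : ℂ) *
                ((2 * Complex.I) ^ n * 2 ^ k) *
                ((∏ s ∈ Finset.univ.filter (fun s : Fin (n + k) => (s : ℕ) < n),
                  Real.sin (α s) : ℝ) : ℂ)) := by
          nth_rewrite 1 [hrein]
          rw [← Finset.sum_add_distrib, ← Finset.sum_add_distrib]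
          refine Finset.sum_congr rfl (fun p _ => ?_)
          beta_reduce
          have hπ : (∏ s ∈ Finset.univ.filter (fun s : Fin (n + k) => (s : ℕ) < n),
              (((-p) s : ℤ) : ℂ)) =
              -(∏ s ∈ Finset.univ.filter (fun s : Fin (n + k) => (s : ℕ) < n), (p s : ℂ)) := by
            have h1 : ∀ s ∈ Finset.univ.filter (fun s : Fin (n + k) => (s : ℕ) < n),
                (((-p) s : ℤ) : ℂ) = (-1) * ((p s : ℤ) : ℂ) := fun s _ => by
              rw [Pi.neg_apply]; push_cast; ring
            rw [Finset.prod_congr rfl h1, Finset.prod_mul_distrib, Finset.prod_const,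
              card_S, Odd.neg_one_pow hn, neg_one_mul]
          rw [hπ, Phi_neg, Psi_neg, Real.cos_neg]
          rw [show -PhiF n k t α p - -PsiF n k α p = -(PhiF n k t α p - PsiF n k α p) from
            by ring]
          rw [show Ee (-PhiF n k t α p) = Ee (PhiF n k t α p) -
              2 * ((Real.sin (PhiF n k t α p) : ℝ) : ℂ) * Complex.I from by
            rw [← Ee_sub_neg]; ring]
          rw [show Ee (-(PhiF n k t α p - PsiF n k α p)) = Ee (PhiF n k t α p - PsiF n k α p) -
              2 * ((Real.sin (PhiF n k t α p - PsiF n k α p) : ℝ) : ℂ) * Complex.I from by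
            rw [← Ee_sub_neg]; ring]
          push_cast
          ring
        linear_combination h2 / 2
    _ = ∑ p ∈ Fintype.piFinset (fun _ : Fin (n + k) => ({-1, 1} : Finset ℤ)),
        ((((-1 : ℝ)) ^ ((n + 1) / 2) /
            (2 ^ (n + k) *
              ∏ s ∈ Finset.univ.filter (fun s : Fin (n + k) => (s : ℕ) < n),
                Real.sin (α s)) : ℝ) : ℂ) * ((G p : ℝ) : ℂ) := by
        refine Finset.sum_congr rfl (fun p hp => ?_)
        have hπσ : (∏ s ∈ Finset.univ.filter (fun s : Fin (n + k) => (s : ℕ) < n),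
            (p s : ℂ)) *
            (-1) ^ (Finset.univ.filter
              (fun l : Fin (n + k) => (l : ℕ) < n ∧ p l = 1)).card = -1 :=
          (pi_eq n k p hp).trans (Odd.neg_one_pow hn)
        have hD : (((1 - 2 * ρ * Real.cos (PsiF n k α p) + ρ ^ 2 : ℝ)) : ℂ) ≠ 0 := by
          exact_mod_cast (Dpos ρ (PsiF n k α p) hρ).ne'
        have hC : (((∏ s ∈ Finset.univ.filter (fun s : Fin (n + k) => (s : ℕ) < n),
            Real.sin (α s) : ℝ)) : ℂ) ≠ 0 := by exact_mod_cast hCr0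
        exact scalar_step n k _ hn _ hπσ _ _
          (Real.sin (PhiF n k t α p) - ρ * Real.sin (PhiF n k t α p - PsiF n k α p)) hD hC
    _ = ((((-1 : ℝ)) ^ ((n + 1) / 2) /
            (2 ^ (n + k) *
              ∏ s ∈ Finset.univ.filter (fun s : Fin (n + k) => (s : ℕ) < n),
                Real.sin (α s)) : ℝ) : ℂ) *
        ((∑ p ∈ Fintype.piFinset (fun _ : Fin (n + k) => ({-1, 1} : Finset ℤ)), G p : ℝ) : ℂ) := by
        rw [← Finset.mul_sum, Complex.ofReal_sum]
    _ = _ := by rw [← Complex.ofReal_mul]
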